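/- For every odd positive integer m and every natural number j, the equality 𝔉(X^j / (X^m − 1)) = X^{γ_m(j)} / (X^m − 1) holds in RatFunc ℂ. -/

import Mathlib

/-- The `n`-th coefficient of the Laurent expansion at `0` of a rational function. -/
noncomputable def coeffL (R : RatFunc ℂ) (n : ℤ) : ℂ :=
  ((R : LaurentSeries ℂ)).coeff n

/-- The map `γ_m : ℤ → ℤ`, `γ_m(j) = (m-1+j)/2` if `j` is even and `(j-1)/2` if `j` is odd. -/
def gammaMap (m j : ℤ) : ℤ :=
  if Even j then (m - 1 + j) / 2 else (j - 1) / 2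

/-- The geometric-type power series `-∑ X^{mt}`. -/
noncomputable def auxG (m : ℕ) : PowerSeries ℂ :=
  PowerSeries.mk fun n => if m ∣ n then -1 else 0

lemma auxG_inv (m : ℕ) (hm' : 0 < m) :
    (PowerSeries.X ^ m - 1) * auxG m = 1 := by
  ext n
  rw [sub_mul, one_mul, map_sub, PowerSeries.coeff_X_pow_mul']
  simp only [auxG, PowerSeries.coeff_mk, PowerSeries.coeff_one]
  rcases Nat.eq_zero_or_pos n with rfl | hn
  · rw [if_neg (by omega), if_pos (dvd_zero m), if_pos rfl]; ring
  · rw [if_neg (by omega : ¬ n = 0)]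
    by_cases h : m ≤ n
    · have hiff : m ∣ n - m ↔ m ∣ n := by
        constructor
        · intro hh
          have := Nat.dvd_add hh (dvd_refl m)
          rwa [Nat.sub_add_cancel h] at this
        · intro hh; exact Nat.dvd_sub hh (dvd_refl m)
      by_cases hd : m ∣ n
      · rw [if_pos h, if_pos (hiff.mpr hd), if_pos hd]; ring
      · rw [if_pos h, if_neg (fun hh => hd (hiff.mp hh)), if_neg hd]; ring
    · have hd : ¬ m ∣ n := fun hh => h (Nat.le_of_dvd hn hh)
      rw [if_neg h, if_neg hd]; ring

lemma coe_aux (m : ℕ) (hm' : 0 < m) (a : ℕ) :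
    ((RatFunc.X ^ a / (RatFunc.X ^ m - 1) : RatFunc ℂ) : LaurentSeries ℂ)
      = ((PowerSeries.X ^ a * auxG m : PowerSeries ℂ) : LaurentSeries ℂ) := by
  have hX : ((RatFunc.X : RatFunc ℂ) : LaurentSeries ℂ)
      = ((PowerSeries.X : PowerSeries ℂ) : LaurentSeries ℂ) := by
    rw [RatFunc.coe_X, PowerSeries.coe_X]
  have hden : ((RatFunc.X ^ m - 1 : RatFunc ℂ) : LaurentSeries ℂ)
      = ((PowerSeries.X ^ m - 1 : PowerSeries ℂ) : LaurentSeries ℂ) := by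
    rw [map_sub, map_pow, map_one,
      PowerSeries.coe_sub, PowerSeries.coe_pow, PowerSeries.coe_one, hX]
  have hinv : ((PowerSeries.X ^ m - 1 : PowerSeries ℂ) : LaurentSeries ℂ)
      * ((auxG m : PowerSeries ℂ) : LaurentSeries ℂ) = 1 := by
    rw [← PowerSeries.coe_mul, auxG_inv m hm', PowerSeries.coe_one]
  have hne : ((PowerSeries.X ^ m - 1 : PowerSeries ℂ) : LaurentSeries ℂ) ≠ 0 := by
    intro h; rw [h, zero_mul] at hinv; exact one_ne_zero hinv.symm
  rw [map_div₀, map_pow, hX, ← PowerSeries.coe_pow, hden,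
    PowerSeries.coe_mul, div_eq_iff hne]
  rw [mul_assoc, mul_comm _ (((PowerSeries.X ^ m - 1 : PowerSeries ℂ) : LaurentSeries ℂ)), hinv,
    mul_one]

lemma coeffL_aux (m : ℕ) (hm' : 0 < m) (a : ℕ) (n : ℤ) :
    coeffL (RatFunc.X ^ a / (RatFunc.X ^ m - 1)) n
      = if (a : ℤ) ≤ n ∧ (m : ℤ) ∣ (n - a) then -1 else 0 := by
  rw [coeffL, coe_aux m hm' a, PowerSeries.coeff_coe]
  by_cases hneg : n < 0
  · rw [if_pos hneg, if_neg]; rintro ⟨h1, -⟩; omega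
  · rw [if_neg hneg]
    push_neg at hneg
    have hcast : ((n.natAbs : ℕ) : ℤ) = n := Int.natAbs_of_nonneg hneg
    rw [PowerSeries.coeff_X_pow_mul']
    simp only [auxG, PowerSeries.coeff_mk]
    by_cases hle : a ≤ n.natAbs
    · rw [if_pos hle]
      have hle' : (a : ℤ) ≤ n := by omega
      have hdvd : m ∣ n.natAbs - a ↔ (m : ℤ) ∣ (n - a) := by
        rw [← Int.natCast_dvd_natCast, Nat.cast_sub hle, hcast]
      by_cases hd : m ∣ n.natAbs - a
      · rw [if_pos hd, if_pos ⟨hle', hdvd.mp hd⟩]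
      · rw [if_neg hd, if_neg]; rintro ⟨-, h2⟩; exact hd (hdvd.mpr h2)
    · rw [if_neg hle, if_neg]; rintro ⟨h1, -⟩; omega

lemma gamma_facts (m j : ℤ) (hm : Odd m) (hm' : 0 < m) (hj : 0 ≤ j) :
    0 ≤ gammaMap m j ∧ j ≤ 2 * gammaMap m j + 1 ∧ 2 * gammaMap m j + 1 < j + 2 * m ∧
      m ∣ 2 * gammaMap m j + 1 - j := by
  obtain ⟨s, hs⟩ := hm
  unfold gammaMap
  by_cases hj2 : Even j
  · obtain ⟨t, ht⟩ := hj2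
    rw [if_pos ⟨t, ht⟩]
    have : (m - 1 + j) / 2 = s + t := by omega
    rw [this]
    refine ⟨by omega, by omega, by omega, ⟨1, by omega⟩⟩
  · rw [if_neg hj2]
    rw [Int.not_even_iff_odd] at hj2
    obtain ⟨t, ht⟩ := hj2
    have : (j - 1) / 2 = t := by omega
    rw [this]
    exact ⟨by omega, by omega, by omega, ⟨0, by omega⟩⟩

lemma odd_dvd_of_dvd_two_mul (m c : ℤ) (hm : Odd m) (h : m ∣ 2 * c) : m ∣ c := by
  obtain ⟨s, hs⟩ := hm
  have h1 : m ∣ 2 * c * (s + 1) := Dvd.dvd.mul_right h _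
  have h2 : m ∣ c * m := Dvd.dvd.mul_left dvd_rfl c
  have : c = 2 * c * (s + 1) - c * m := by rw [hs]; ring
  rw [this]
  exact dvd_sub h1 h2

/-- For an odd positive integer `m` and `j : ℕ`,
`𝔉(X^j / (X^m - 1)) = X^(γ_m(j)) / (X^m - 1)`. -/
theorem stmt_3 (F : RatFunc ℂ → RatFunc ℂ)
    (hF : ∀ R : RatFunc ℂ, ∀ k : ℤ, coeffL (F R) k = coeffL R (2 * k + 1))
    (m : ℕ) (hm : Odd m) (hm' : 0 < m) (j : ℕ) :
    F (RatFunc.X ^ j / (RatFunc.X ^ m - 1)) =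
      RatFunc.X ^ (gammaMap (m : ℤ) (j : ℤ)) / (RatFunc.X ^ m - 1) := by
  have hmz : Odd (m : ℤ) := by exact_mod_cast hm
  have hmZ : (0 : ℤ) < m := by exact_mod_cast hm'
  obtain ⟨hg0, hg1, hg2, hg3⟩ := gamma_facts (m : ℤ) (j : ℤ) hmz hmZ
    (Int.natCast_nonneg j)
  set γ : ℤ := gammaMap (m : ℤ) (j : ℤ) with hγ
  have hγnat : γ = ((γ.toNat : ℕ) : ℤ) := by omega
  have hzpow : (RatFunc.X : RatFunc ℂ) ^ γ = RatFunc.X ^ (γ.toNat) := by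
    conv_lhs => rw [hγnat]
    rw [zpow_natCast]
  rw [hzpow]
  apply (open scoped RatFunc in (algebraMap (RatFunc ℂ) (LaurentSeries ℂ)).injective)
  ext k
  have lhs : ((F (RatFunc.X ^ j / (RatFunc.X ^ m - 1)) : RatFunc ℂ) : LaurentSeries ℂ).coeff k
      = coeffL (F (RatFunc.X ^ j / (RatFunc.X ^ m - 1))) k := rfl
  have rhs : ((RatFunc.X ^ (γ.toNat) / (RatFunc.X ^ m - 1) : RatFunc ℂ) : LaurentSeries ℂ).coeff k
      = coeffL (RatFunc.X ^ (γ.toNat) / (RatFunc.X ^ m - 1)) k := rfl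
  rw [lhs, rhs, hF, coeffL_aux m hm', coeffL_aux m hm']
  rw [← hγnat]
  congr 1
  rw [eq_iff_iff]
  constructor
  · rintro ⟨h1, h2⟩
    have hd2 : (m : ℤ) ∣ 2 * (k - γ) := by
      have heq : 2 * (k - γ) = (2 * k + 1 - j) - (2 * γ + 1 - j) := by ring
      rw [heq]; exact dvd_sub h2 hg3
    have hd : (m : ℤ) ∣ (k - γ) := odd_dvd_of_dvd_two_mul _ _ hmz hd2
    refine ⟨?_, hd⟩
    by_contra hlt
    push_neg at hlt
    obtain ⟨c, hc⟩ := hd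
    have hc0 : c < 0 := by nlinarith
    have hkm : k - γ ≤ -(m : ℤ) := by
      have hc1 : c ≤ -1 := by omega
      nlinarith
    omega
  · rintro ⟨h1, h2⟩
    refine ⟨by omega, ?_⟩
    have heq : 2 * k + 1 - j = 2 * (k - γ) + (2 * γ + 1 - j) := by ring
    rw [heq]
    exact dvd_add (Dvd.dvd.mul_left h2 2) hg3
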